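/- arXiv:2503.18048 — 3 statements merged into one kernel-verified Lean document; each statement's English description precedes it below -/
import Mathlib

section
/- Let m ∈ ℕ and let B be a random variable with the binomial distribution with m trials and success probability 1/2. Then E[ B / (1 + m − B) ] = 1 − 2^{−m}; in particular E[ B / (1 + m − B) ] ≤ 1. -/
open MeasureTheory

private lemma nat_sum_aux (m : ℕ) : ∑ k ∈ Finset.range (m+1), m.choose (k+1) = 2^m - 1 := by
  have h3 := Finset.sum_range_succ' (fun k => m.choose k) (m+1)
  simp only [Nat.choose_zero_right] at h3
  rw [Finset.sum_range_succ, Nat.sum_range_choose, Nat.choose_eq_zero_of_lt (by omega)] at h3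
  omega

private lemma key_sum_aux (m : ℕ) :
    ∑ k ∈ Finset.range (m+1), ((k:ℝ)/(1+(m:ℝ)-(k:ℝ))) * ((m.choose k : ℝ)/2^m)
      = 1 - (2:ℝ)⁻¹^m := by
  rw [← Finset.sum_range_reflect]
  have h : ∀ k ∈ Finset.range (m+1),
      (((m + 1 - 1 - k : ℕ):ℝ)/(1+(m:ℝ)-((m + 1 - 1 - k : ℕ):ℝ))) * ((m.choose (m + 1 - 1 - k) : ℝ)/2^m)
        = (m.choose (k+1) : ℝ)/2^m := by
    intro k hk
    rw [Finset.mem_range] at hk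
    have hkm : k ≤ m := by omega
    have he : m + 1 - 1 - k = m - k := by omega
    rw [he, Nat.choose_symm hkm, Nat.cast_sub hkm]
    have hid : ((m.choose (k+1) : ℝ)) * (k+1) = (m.choose k : ℝ) * ((m:ℝ) - k) := by
      have h0 := Nat.choose_succ_right_eq m k
      have h1 : ((m.choose (k+1) : ℝ)) * ((k:ℝ)+1) = (m.choose k : ℝ) * (((m-k:ℕ)):ℝ) := by
        exact_mod_cast h0
      rwa [Nat.cast_sub hkm] at h1
    have hk1 : (k:ℝ) + 1 ≠ 0 := by positivity
    have h2m : (2:ℝ)^m ≠ 0 := by positivity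
    have hden : 1 + (m:ℝ) - ((m:ℝ) - k) = (k:ℝ) + 1 := by ring
    rw [hden]
    field_simp
    linear_combination -hid
  rw [Finset.sum_congr rfl h, ← Finset.sum_div]
  have hs : ∑ k ∈ Finset.range (m+1), (m.choose (k+1) : ℝ) = 2^m - 1 := by
    rw [← Nat.cast_sum, nat_sum_aux m]
    have h1 : (1:ℕ) ≤ 2^m := Nat.one_le_two_pow
    push_cast [Nat.cast_sub h1]
    ring
  rw [hs, inv_pow]
  field_simp

/-- **Expectation of the binomial ratio.**
If `B` has the binomial distribution with `m` trials and success probability `1/2`,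
i.e. `P(B = k) = C(m,k)·2^{-m}` for every `k`, then
`E[ B / (1 + m - B) ] = 1 - 2^{-m}`, and in particular this expectation is `≤ 1`. -/
theorem binomial_ratio_expectation {Ω : Type*} [MeasurableSpace Ω]
    (ℙ : Measure Ω) [IsProbabilityMeasure ℙ] (m : ℕ)
    (B : Ω → ℕ) (hB : Measurable B)
    (hdist : ∀ k : ℕ, ℙ {ω | B ω = k} = ENNReal.ofReal ((m.choose k : ℝ) / 2 ^ m)) :
    (∫ ω, (B ω : ℝ) / (1 + (m : ℝ) - (B ω : ℝ)) ∂ℙ) = 1 - (2 : ℝ)⁻¹ ^ m ∧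
    (∫ ω, (B ω : ℝ) / (1 + (m : ℝ) - (B ω : ℝ)) ∂ℙ) ≤ 1 := by
  set f : ℕ → ℝ := fun k => (k:ℝ)/(1+(m:ℝ)-(k:ℝ)) with hf
  have hmeas : ∀ k : ℕ, MeasurableSet {ω | B ω = k} := fun k =>
    hB (MeasurableSet.singleton k)
  have hnull : ℙ {ω | m < B ω} = 0 := by
    have hU : {ω | m < B ω} = ⋃ k : ℕ, {ω | B ω = m + 1 + k} := by
      ext ω
      simp only [Set.mem_setOf_eq, Set.mem_iUnion]
      constructor
      · intro h; exact ⟨B ω - (m+1), by omega⟩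
      · rintro ⟨k, hk⟩; omega
    rw [hU]
    refine measure_iUnion_null fun k => ?_
    rw [hdist, Nat.choose_eq_zero_of_lt (by omega)]
    simp
  have haele : ∀ᵐ ω ∂ℙ, B ω ≤ m := by
    rw [ae_iff]
    convert hnull using 2
    ext ω; simp [not_le]
  have hae : (fun ω => (B ω : ℝ) / (1 + (m:ℝ) - (B ω : ℝ)))
      =ᵐ[ℙ] fun ω => ∑ k ∈ Finset.range (m+1),
        Set.indicator {ω' | B ω' = k} (fun _ => f k) ω := by
    filter_upwards [haele] with ω hω
    have hsum : ∑ k ∈ Finset.range (m+1),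
        Set.indicator {ω' | B ω' = k} (fun _ => f k) ω = f (B ω) := by
      rw [Finset.sum_eq_single (B ω)]
      · exact Set.indicator_of_mem rfl _
      · intro b _ hb
        apply Set.indicator_of_notMem
        intro h
        rw [Set.mem_setOf_eq] at h
        exact hb h.symm
      · intro h
        exact absurd (Finset.mem_range.mpr (by omega)) h
    rw [hsum]
  have hint : (∫ ω, (B ω : ℝ) / (1 + (m : ℝ) - (B ω : ℝ)) ∂ℙ) = 1 - (2 : ℝ)⁻¹ ^ m := by
    rw [integral_congr_ae hae,
      integral_finset_sum _ (fun k _ => (integrable_const (f k)).indicator (hmeas k))]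
    have hterm : ∀ k ∈ Finset.range (m+1),
        (∫ ω, Set.indicator {ω' | B ω' = k} (fun _ => f k) ω ∂ℙ)
          = f k * ((m.choose k : ℝ)/2^m) := by
      intro k _
      rw [integral_indicator_const _ (hmeas k), measureReal_def, hdist k,
        ENNReal.toReal_ofReal (by positivity), smul_eq_mul, mul_comm]
    rw [Finset.sum_congr rfl hterm]
    exact key_sum_aux m
  refine ⟨hint, ?_⟩
  rw [hint]
  have : (0:ℝ) ≤ (2:ℝ)⁻¹ ^ m := by positivity
  linarith
end

section
/- Let ε₁, …, ε_k (k ≥ 1) be independent random variables, each uniformly distributed on {−1, +1}. Set V⁺ = #{i ≤ k : ε_i = +1}, V⁻ = k − V⁺, and likewise V⁺′ = #{i ≤ k−1 : ε_i = +1}, V⁻′ = (k−1) − V⁺′. Then almost surely E[ V⁺′ / (1 + V⁻′) ∣ V⁺ ] ≤ V⁺ / (1 + V⁻); that is, the ratio process V⁺/(1+V⁻) is, in the direction of decreasing k, a supermartingale with respect to the filtration generated by the sign counts. -/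
open MeasureTheory ProbabilityTheory Finset
open scoped Classical ENNReal

private def cntF {n : ℕ} (b : Fin n → Bool) : ℕ := (univ.filter fun i => b i = true).card

private lemma card_fiber (n v : ℕ) :
    (univ.filter fun b : Fin n → Bool => cntF b = v).card = n.choose v := by
  have h : ((univ : Finset (Fin n)).powersetCard v).card = n.choose v := by
    rw [Finset.card_powersetCard, card_univ, Fintype.card_fin]
  rw [← h]
  refine Finset.card_bij' (fun b _ => univ.filter fun i => b i = true)
    (fun s _ => fun i => decide (i ∈ s)) ?_ ?_ ?_ ?_
  · intro b hb
    rw [mem_filter] at hb; simp only [mem_univ, true_and, cntF] at hb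
    simp [Finset.mem_powersetCard, hb]
  · intro s hs
    simp only [Finset.mem_powersetCard] at hs
    rw [mem_filter]; simp only [mem_univ, true_and, cntF]
    rw [show (univ.filter fun i => decide (i ∈ s) = true) = s by
      ext i; simp]
    exact hs.2
  · intro b hb; funext i; simp
  · intro s hs; ext i; simp

private def cntP {m : ℕ} (b : Fin (m+1) → Bool) : ℕ :=
  (univ.filter fun i : Fin (m+1) => (i:ℕ) < m ∧ b i = true).card

private lemma cntP_eq {m : ℕ} (b : Fin (m+1) → Bool) :
    cntP b = cntF (fun i : Fin m => b i.castSucc) := by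
  simp only [cntP, cntF, Finset.card_filter]
  rw [Fin.sum_univ_castSucc]
  simp [Fin.is_lt]

private lemma cntF_split {m : ℕ} (b : Fin (m+1) → Bool) :
    cntF b = cntP b + (if b (Fin.last m) = true then 1 else 0) := by
  simp only [cntP, cntF, Finset.card_filter]
  rw [Fin.sum_univ_castSucc, Fin.sum_univ_castSucc]
  simp [Fin.is_lt]

private lemma card_fiberT (m v : ℕ) (hv : 1 ≤ v) :
    (univ.filter fun b : Fin (m+1) → Bool => cntF b = v ∧ b (Fin.last m) = true).card
      = m.choose (v-1) := by
  rw [← card_fiber m (v-1)]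
  refine Finset.card_bij' (fun b _ => fun i : Fin m => b i.castSucc)
    (fun c _ => Fin.snoc c true) ?_ ?_ ?_ ?_
  · intro b hb
    simp only [mem_filter, mem_univ, true_and] at hb ⊢
    rw [cntF_split, if_pos hb.2, cntP_eq] at hb
    omega
  · intro c hc
    simp only [mem_filter, mem_univ, true_and] at hc ⊢
    constructor
    · rw [cntF_split, cntP_eq]
      simp [Fin.snoc_castSucc, Fin.snoc_last]
      have hc' : (cntF fun i : Fin m => c i) = v - 1 := hc
      omega
    · simp [Fin.snoc_last]
  · intro b hb
    simp only [mem_filter, mem_univ, true_and] at hb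
    funext i
    refine Fin.lastCases ?_ ?_ i
    · simp [Fin.snoc_last, hb.2]
    · intro j; simp [Fin.snoc_castSucc]
  · intro c hc; funext i; simp [Fin.snoc_castSucc]

private lemma card_fiberF (m v : ℕ) :
    (univ.filter fun b : Fin (m+1) → Bool => cntF b = v ∧ ¬ b (Fin.last m) = true).card
      = m.choose v := by
  rw [← card_fiber m v]
  refine Finset.card_bij' (fun b _ => fun i : Fin m => b i.castSucc)
    (fun c _ => Fin.snoc c false) ?_ ?_ ?_ ?_
  · intro b hb
    simp only [mem_filter, mem_univ, true_and] at hb ⊢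
    rw [cntF_split, if_neg hb.2, cntP_eq] at hb
    omega
  · intro c hc
    simp only [mem_filter, mem_univ, true_and] at hc ⊢
    constructor
    · rw [cntF_split, cntP_eq]
      simp only [Fin.snoc_castSucc, Fin.snoc_last]
      have hc' : (cntF fun i : Fin m => c i) = v := hc
      simpa using hc'
    · simp [Fin.snoc_last]
  · intro b hb
    simp only [mem_filter, mem_univ, true_and] at hb
    funext i
    refine Fin.lastCases ?_ ?_ i
    · simp only [Fin.snoc_last]
      exact (Bool.not_eq_true _).mp hb.2 |>.symm
    · intro j; simp [Fin.snoc_castSucc]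
  · intro c hc; funext i; simp [Fin.snoc_castSucc]

private noncomputable def gbar (m v : ℕ) : ℝ :=
  if v = m+1 then (m:ℝ) else (v:ℝ)/(1 + ((m:ℝ) + 1 - (v:ℝ)))

private lemma cntP_le_cntF {m : ℕ} (b : Fin (m+1) → Bool) : cntP b ≤ cntF b := by
  apply Finset.card_le_card
  intro i hi; simp only [mem_filter] at hi ⊢; exact ⟨hi.1, hi.2.2⟩

private lemma key_sum (m v : ℕ) (hv : v ≤ m+1) :
    ∑ b ∈ univ.filter (fun b : Fin (m+1) → Bool => cntF b = v),
      ((cntP b : ℝ) / (1 + ((m:ℝ) - (cntP b : ℝ))))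
    = ((m+1).choose v : ℝ) * gbar m v := by
  rcases Nat.eq_zero_or_pos v with rfl | hv1
  · rw [Finset.sum_eq_zero, gbar, if_neg (by omega)]
    · simp
    · intro b hb
      simp only [mem_filter, mem_univ, true_and] at hb
      have : cntP b = 0 := le_antisymm (hb ▸ cntP_le_cntF b) (Nat.zero_le _)
      rw [this]; simp
  · obtain ⟨u, rfl⟩ : ∃ u, v = u + 1 := ⟨v - 1, by omega⟩
    rw [← Finset.sum_filter_add_sum_filter_not _ (fun b => b (Fin.last m) = true),
      Finset.filter_filter, Finset.filter_filter]
    have hT : ∀ b ∈ univ.filter (fun b : Fin (m+1) → Bool =>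
        cntF b = u + 1 ∧ b (Fin.last m) = true),
        ((cntP b : ℝ) / (1 + ((m:ℝ) - (cntP b : ℝ))))
          = (u:ℝ)/(1 + ((m:ℝ) - (u:ℝ))) := by
      intro b hb
      simp only [mem_filter, mem_univ, true_and] at hb
      have h1 := cntF_split b
      rw [hb.1, if_pos hb.2] at h1
      have : cntP b = u := by omega
      rw [this]
    have hF : ∀ b ∈ univ.filter (fun b : Fin (m+1) → Bool =>
        cntF b = u + 1 ∧ ¬ b (Fin.last m) = true),
        ((cntP b : ℝ) / (1 + ((m:ℝ) - (cntP b : ℝ))))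
          = ((u:ℝ)+1)/((m:ℝ) - (u:ℝ)) := by
      intro b hb
      simp only [mem_filter, mem_univ, true_and] at hb
      have h1 := cntF_split b
      rw [hb.1, if_neg hb.2] at h1
      have : cntP b = u + 1 := by omega
      rw [this]
      push_cast
      ring_nf
    rw [Finset.sum_congr rfl hT, Finset.sum_congr rfl hF, Finset.sum_const,
      Finset.sum_const, card_fiberT m (u+1) (by omega), card_fiberF m (u+1)]
    simp only [Nat.add_sub_cancel, nsmul_eq_mul]
    have hum : u ≤ m := by omega
    rcases eq_or_lt_of_le hum with rfl | hlt
    · simp [gbar, Nat.choose_self, Nat.choose_succ_self]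
    · have hC : (m.choose (u+1) : ℝ) * ((u:ℝ)+1) = (m.choose u : ℝ) * ((m:ℝ) - u) := by
        have := Nat.choose_succ_right_eq m u
        have h2 : ((m.choose (u+1) * (u+1) : ℕ) : ℝ) = ((m.choose u * (m - u) : ℕ) : ℝ) := by
          exact_mod_cast congrArg (Nat.cast (R := ℝ)) this
        push_cast [Nat.cast_sub hum] at h2
        linarith [h2]
      have hPascal : ((m+1).choose (u+1) : ℝ) = (m.choose u : ℝ) + (m.choose (u+1) : ℝ) := by
        rw [Nat.choose_succ_succ]; push_cast; ring
      rw [gbar, if_neg (by omega), hPascal]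
      have hd1 : (1 : ℝ) + ((m:ℝ) - u) ≠ 0 := by
        have : (u:ℝ) ≤ m := by exact_mod_cast hum
        linarith
      have hd2 : (m:ℝ) - (u:ℝ) ≠ 0 := by
        have : (u:ℝ) < m := by exact_mod_cast hlt
        linarith
      have hd3 : (1:ℝ) + ((m:ℝ) + 1 - ((u:ℕ)+1:ℕ)) ≠ 0 := by
        push_cast
        have : (u:ℝ) ≤ m := by exact_mod_cast hum
        linarith
      push_cast
      field_simp
      rw [eq_div_iff (by push_cast at hd3; exact hd3)]
      linear_combination (1 + ((m:ℝ) - u)) * hC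

private lemma cntF_le {n : ℕ} (b : Fin n → Bool) : cntF b ≤ n := by
  have := Finset.card_filter_le (univ : Finset (Fin n)) (fun i => b i = true)
  simpa [cntF] using this

private lemma gbar_le (m v : ℕ) (hv : v ≤ m + 1) :
    gbar m v ≤ (v:ℝ)/(1 + ((m:ℝ) + 1 - (v:ℝ))) := by
  rcases eq_or_ne v (m+1) with rfl | hne
  · rw [gbar, if_pos rfl]
    push_cast
    rw [show (1:ℝ) + ((m:ℝ)+1 - ((m:ℝ)+1)) = 1 by ring, div_one]
    linarith
  · rw [gbar, if_neg hne]

set_option maxHeartbeats 2000000 in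
/-- **One-step backward supermartingale property of the sign-ratio process.**
Let `ε₁, …, ε_k` (`k ≥ 1`) be i.i.d. uniform `{-1, +1}` random variables, let
`V⁺ = #{i ≤ k : ε_i = +1}`, `V⁻ = k - V⁺`, and let `V⁺′, V⁻′` be the analogous
counts over the first `k - 1` signs. Then a.s.
`E[ V⁺′ / (1 + V⁻′) ∣ V⁺ ] ≤ V⁺ / (1 + V⁻)`. -/
theorem sign_ratio_one_step_supermartingale
    {Ω : Type*} [MeasurableSpace Ω]
    (P : Measure Ω) [IsProbabilityMeasure P]
    (k : ℕ) (hk : 1 ≤ k) (ε : Fin k → Ω → ℝ) (hmeas : ∀ i, Measurable (ε i))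
    (hindep : iIndepFun ε P)
    (hunif : ∀ i, P {ω | ε i ω = 1} = 1 / 2 ∧ P {ω | ε i ω = -1} = 1 / 2) :
    ∀ᵐ ω ∂P,
      (P[fun ω' =>
            ((univ.filter fun i : Fin k => (i : ℕ) < k - 1 ∧ ε i ω' = 1).card : ℝ) /
              (1 + (((k : ℝ) - 1) -
                ((univ.filter fun i : Fin k => (i : ℕ) < k - 1 ∧ ε i ω' = 1).card : ℝ)))
          | MeasurableSpace.comap
              (fun ω' => (univ.filter fun i : Fin k => ε i ω' = 1).card)
              inferInstance]) ω ≤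
        ((univ.filter fun i : Fin k => ε i ω = 1).card : ℝ) /
          (1 + ((k : ℝ) - ((univ.filter fun i : Fin k => ε i ω = 1).card : ℝ))) := by
  obtain ⟨m, rfl⟩ : ∃ m, k = m + 1 := ⟨k - 1, (Nat.succ_pred_eq_of_pos hk).symm⟩
  -- the sign-pattern map
  set σf : Ω → (Fin (m+1) → Bool) := fun ω i => if ε i ω = 1 then true else false with hσf
  have hσmeas : Measurable σf := measurable_pi_lambda _ fun i =>
    Measurable.ite ((hmeas i) (measurableSet_singleton 1)) measurable_const measurable_const
  have hσtrue : ∀ ω i, (σf ω i = true) ↔ (ε i ω = 1) := by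
    intro ω i
    by_cases h : ε i ω = 1 <;> simp [hσf, h]
  set V : Ω → ℕ := fun ω => (univ.filter fun i : Fin (m+1) => ε i ω = 1).card with hV
  have hVcnt : ∀ ω, V ω = cntF (σf ω) := by
    intro ω
    simp only [cntF]
    exact congrArg Finset.card
      (Finset.filter_congr fun i _ => (iff_of_eq (propext (hσtrue ω i))).symm)
  have hWcnt : ∀ ω,
      (univ.filter fun i : Fin (m+1) => (i:ℕ) < (m+1) - 1 ∧ ε i ω = 1).card = cntP (σf ω) := by
    intro ω
    simp only [cntP]
    exact congrArg Finset.card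
      (Finset.filter_congr fun i _ => by
        rw [Nat.add_sub_cancel]
        exact and_congr_right fun _ => (hσtrue ω i).symm)
  have hVmeas : Measurable V := by
    have hVc : V = cntF ∘ σf := funext hVcnt
    rw [hVc]; exact (measurable_of_countable _).comp hσmeas
  have hm : MeasurableSpace.comap V inferInstance ≤ ‹MeasurableSpace Ω› := hVmeas.comap_le
  -- distribution of the pattern map
  have hmap : ∀ b : Fin (m+1) → Bool, P.map σf {b} = (1/2 : ℝ≥0∞)^(m+1) := by
    intro b
    rw [Measure.map_apply hσmeas (measurableSet_singleton b)]
    have hpre : σf ⁻¹' {b} = ⋂ i, (ε i) ⁻¹' (if b i = true then {1} else ({1}ᶜ : Set ℝ)) := by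
      ext ω
      simp only [Set.mem_preimage, Set.mem_singleton_iff, funext_iff, Set.mem_iInter]
      refine forall_congr' fun i => ?_
      by_cases hbi : b i = true <;> by_cases hε : ε i ω = 1 <;>
        simp [hσf, hbi, hε, Bool.not_eq_true] at *
    rw [hpre, hindep.meas_iInter (fun i => ⟨if b i = true then {1} else {1}ᶜ,
      by split
         · exact measurableSet_singleton 1
         · exact (measurableSet_singleton 1).compl, rfl⟩)]
    have hone : ∀ i, (ε i) ⁻¹' ({1} : Set ℝ) = {ω | ε i ω = 1} := fun i => rfl
    have hhalf : ∀ i, P ((ε i) ⁻¹' (if b i = true then {1} else ({1}ᶜ : Set ℝ))) = 1/2 := by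
      intro i
      by_cases hbi : b i = true
      · rw [if_pos hbi, hone i]; exact (hunif i).1
      · rw [if_neg hbi, Set.preimage_compl,
          measure_compl ((hmeas i) (measurableSet_singleton 1)) (measure_ne_top _ _),
          measure_univ, hone i, (hunif i).1]
        rw [one_div, ENNReal.one_sub_inv_two]
    rw [Finset.prod_congr rfl (fun i _ => hhalf i), Finset.prod_const, card_univ,
      Fintype.card_fin]
  -- integrals of functions of the pattern
  haveI : IsProbabilityMeasure (P.map σf) := Measure.isProbabilityMeasure_map hσmeas.aemeasurable
  have hintegrable : ∀ φ : (Fin (m+1) → Bool) → ℝ, Integrable (fun ω => φ (σf ω)) P := by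
    intro φ
    exact (integrable_map_measure (measurable_of_countable φ).aestronglyMeasurable
      hσmeas.aemeasurable).mp (.of_finite)
  have hintφ : ∀ φ : (Fin (m+1) → Bool) → ℝ,
      ∫ ω, φ (σf ω) ∂P = ∑ b : Fin (m+1) → Bool, ((1/2:ℝ))^(m+1) * φ b := by
    intro φ
    rw [← integral_map hσmeas.aemeasurable (measurable_of_countable φ).aestronglyMeasurable,
      integral_fintype (.of_finite)]
    refine Finset.sum_congr rfl fun b _ => ?_
    rw [measureReal_def, hmap b, smul_eq_mul]
    congr 1
    rw [ENNReal.toReal_pow]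
    norm_num
  -- the target function of the pattern
  set F : (Fin (m+1) → Bool) → ℝ :=
    fun b => (cntP b : ℝ) / (1 + ((m:ℝ) - (cntP b : ℝ))) with hF
  have hfeq : (fun ω' =>
      ((univ.filter fun i : Fin (m+1) => (i : ℕ) < (m+1) - 1 ∧ ε i ω' = 1).card : ℝ) /
        (1 + ((((m+1 : ℕ) : ℝ) - 1) -
          ((univ.filter fun i : Fin (m+1) => (i : ℕ) < (m+1) - 1 ∧ ε i ω' = 1).card : ℝ))))
      = fun ω => F (σf ω) := by
    funext ω
    rw [hWcnt ω, hF]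
    push_cast
    ring_nf
  set g : Ω → ℝ := fun ω => gbar m (V ω) with hg
  have hgint : Integrable g P := by
    have : g = fun ω => (fun b => gbar m (cntF b)) (σf ω) := by
      funext ω; rw [hg]; simp only; rw [hVcnt ω]
    rw [this]; exact hintegrable fun b => gbar m (cntF b)
  have hVm : Measurable[MeasurableSpace.comap V inferInstance] V :=
    Measurable.of_comap_le le_rfl
  have hgm2 : Measurable[MeasurableSpace.comap V inferInstance] g :=
    Measurable.comp (g := gbar m) (f := V) measurable_from_top hVm
  have hgsm : StronglyMeasurable[MeasurableSpace.comap V inferInstance] g :=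
    hgm2.stronglyMeasurable
  -- the conditional expectation identification
  have hcond : g =ᵐ[P] P[(fun ω => F (σf ω)) |
      MeasurableSpace.comap V inferInstance] := by
    refine ae_eq_condExp_of_forall_setIntegral_eq hm (hintegrable F)
      (fun s _ _ => hgint.integrableOn) ?_ (StronglyMeasurable.aestronglyMeasurable hgsm)
    intro s hs _
    obtain ⟨S, -, rfl⟩ := hs
    have hSm : MeasurableSet S := MeasurableSpace.measurableSet_top
    have hA : MeasurableSet (V ⁻¹' S) := hVmeas hSm
    rw [← integral_indicator hA, ← integral_indicator hA]
    have hg_ind : Set.indicator (V ⁻¹' S) g =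
        fun ω => (fun b => if cntF b ∈ S then gbar m (cntF b) else 0) (σf ω) := by
      funext ω
      rw [Set.indicator_apply]
      by_cases hωS : cntF (σf ω) ∈ S
      · rw [if_pos (by rw [Set.mem_preimage, hVcnt ω]; exact hωS)]
        simp only [if_pos hωS]
        rw [hg]; simp only; rw [hVcnt ω]
      · rw [if_neg (by rw [Set.mem_preimage, hVcnt ω]; exact hωS)]
        simp only [if_neg hωS]
    have hf_ind : Set.indicator (V ⁻¹' S) (fun ω => F (σf ω)) =
        fun ω => (fun b => if cntF b ∈ S then F b else 0) (σf ω) := by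
      funext ω
      rw [Set.indicator_apply]
      by_cases hωS : cntF (σf ω) ∈ S
      · rw [if_pos (by rw [Set.mem_preimage, hVcnt ω]; exact hωS)]
        simp only [if_pos hωS]
      · rw [if_neg (by rw [Set.mem_preimage, hVcnt ω]; exact hωS)]
        simp only [if_neg hωS]
    rw [hg_ind, hf_ind, hintφ, hintφ, ← Finset.mul_sum, ← Finset.mul_sum]
    congr 1
    have hmapsto : ∀ b : Fin (m+1) → Bool, b ∈ (univ : Finset (Fin (m+1) → Bool)) →
        cntF b ∈ Finset.range (m+2) :=
      fun b _ => Finset.mem_range.mpr (Nat.lt_succ_of_le (cntF_le b))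
    rw [← Finset.sum_fiberwise_of_maps_to hmapsto
        (fun b => if cntF b ∈ S then gbar m (cntF b) else 0),
      ← Finset.sum_fiberwise_of_maps_to hmapsto
        (fun b => if cntF b ∈ S then F b else 0)]
    refine Finset.sum_congr rfl fun v hv => ?_
    have hvle : v ≤ m + 1 := Nat.lt_succ_iff.mp (Finset.mem_range.mp hv)
    by_cases hvS : v ∈ S
    · have hL : ∑ b ∈ univ.filter (fun b : Fin (m+1) → Bool => cntF b = v),
          (if cntF b ∈ S then gbar m (cntF b) else 0)
          = ((m+1).choose v : ℝ) * gbar m v := by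
        calc ∑ b ∈ univ.filter (fun b : Fin (m+1) → Bool => cntF b = v),
              (if cntF b ∈ S then gbar m (cntF b) else 0)
            = ∑ _b ∈ univ.filter (fun b : Fin (m+1) → Bool => cntF b = v), gbar m v := by
              refine Finset.sum_congr rfl fun b hb => ?_
              simp only [Finset.mem_filter, Finset.mem_univ, true_and] at hb
              rw [hb, if_pos hvS]
          _ = ((m+1).choose v : ℝ) * gbar m v := by
              rw [Finset.sum_const, card_fiber (m+1) v, nsmul_eq_mul]
      have hR : ∑ b ∈ univ.filter (fun b : Fin (m+1) → Bool => cntF b = v),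
          (if cntF b ∈ S then F b else 0)
          = ((m+1).choose v : ℝ) * gbar m v := by
        calc ∑ b ∈ univ.filter (fun b : Fin (m+1) → Bool => cntF b = v),
              (if cntF b ∈ S then F b else 0)
            = ∑ b ∈ univ.filter (fun b : Fin (m+1) → Bool => cntF b = v), F b := by
              refine Finset.sum_congr rfl fun b hb => ?_
              simp only [Finset.mem_filter, Finset.mem_univ, true_and] at hb
              rw [hb, if_pos hvS]
          _ = ((m+1).choose v : ℝ) * gbar m v := key_sum m v hvle
      rw [hL, hR]
    · rw [Finset.sum_eq_zero, Finset.sum_eq_zero]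
      · intro b hb
        simp only [Finset.mem_filter, Finset.mem_univ, true_and] at hb
        rw [hb, if_neg hvS]
      · intro b hb
        simp only [Finset.mem_filter, Finset.mem_univ, true_and] at hb
        rw [hb, if_neg hvS]
  -- conclude
  rw [hfeq]
  filter_upwards [hcond] with ω hω
  rw [← hω]
  have h1 : V ω ≤ m + 1 := by rw [hVcnt ω]; exact cntF_le _
  have h2 : g ω = gbar m (V ω) := rfl
  show g ω ≤ ((V ω : ℕ) : ℝ) / (1 + (((m+1 : ℕ) : ℝ) - ((V ω : ℕ) : ℝ)))
  rw [h2]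
  push_cast
  exact gbar_le m (V ω) h1
end

section
/- Let ε₁, …, ε_m be independent random variables, each uniformly distributed on {−1, +1}. For k = 0, 1, …, m let V⁺(k) = #{i ≤ k : ε_i = +1}, V⁻(k) = k − V⁺(k), and M_k = V⁺(k) / (1 + V⁻(k)). Re-index time backwards by setting N_j = M_{m−j} for j = 0, 1, …, m, and let (G_j)_{j=0}^{m} be the filtration G_j = σ( V⁺(m), V⁺(m−1), …, V⁺(m−j) ). Then (N_j)_{j=0}^{m} is a supermartingale with respect to (G_j), and for every stopping time T ≤ m with respect to (G_j) one has E[ N_T ] ≤ E[ N_0 ] = 1 − 2^{−m} ≤ 1. -/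
open MeasureTheory ProbabilityTheory Finset
open scoped Classical

/-- `Vplus m ε k ω` is the number of `+1`'s among the first `k` of the `m` signs
`ε₁(ω), …, ε_m(ω)`. -/
noncomputable def Vplus {Ω : Type*} (m : ℕ) (ε : Fin m → Ω → ℝ) (k : ℕ) (ω : Ω) : ℕ :=
  (univ.filter fun i : Fin m => (i : ℕ) < k ∧ ε i ω = 1).card

/-- `ratioM m ε k = V⁺(k) / (1 + V⁻(k))` where `V⁻(k) = k - V⁺(k)`. -/
noncomputable def ratioM {Ω : Type*} (m : ℕ) (ε : Fin m → Ω → ℝ) (k : ℕ) (ω : Ω) : ℝ :=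
  (Vplus m ε k ω : ℝ) / (1 + ((k : ℝ) - (Vplus m ε k ω : ℝ)))

/-- The ratio process re-indexed backwards in time: `N_j = M_{m-j}`. -/
noncomputable def ratioN {Ω : Type*} (m : ℕ) (ε : Fin m → Ω → ℝ) (j : ℕ) (ω : Ω) : ℝ :=
  ratioM m ε (m - j) ω

/-- number of `true`s among the first `k` coordinates of `β`. -/
noncomputable def cntB (m k : ℕ) (β : Fin m → Bool) : ℕ :=
  (univ.filter fun i : Fin m => (i : ℕ) < k ∧ β i = true).card

lemma cntB_le (m k : ℕ) (β : Fin m → Bool) : cntB m k β ≤ k := by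
  classical
  have h : cntB m k β ≤ (Finset.range k).card := by
    refine Finset.card_le_card_of_injOn (fun i => (i : ℕ)) ?_ ?_
    · intro i hi
      simp only [Finset.mem_coe, mem_filter, mem_univ, true_and] at hi
      exact Finset.mem_range.mpr hi.1
    · intro a _ b _ h
      exact Fin.ext h
  simpa using h

lemma card_filter_lt (m k : ℕ) (hk : k ≤ m) :
    (univ.filter fun i : Fin m => (i : ℕ) < k).card = k := by
  classical
  have h1 : (univ.filter fun i : Fin m => (i : ℕ) < k).card = (Finset.range k).card := by
    refine Finset.card_bij' (fun i _ => (i : ℕ))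
      (fun a ha => ⟨a, lt_of_lt_of_le (Finset.mem_range.mp ha) hk⟩) ?_ ?_ ?_ ?_
    · intro a ha
      simp only [mem_filter, mem_univ, true_and] at ha
      exact Finset.mem_range.mpr ha
    · intro a ha
      simp only [mem_filter, mem_univ, true_and]
      exact Finset.mem_range.mp ha
    · intro a _; rfl
    · intro a _; rfl
  rw [h1, Finset.card_range]

lemma cntB_split (m : ℕ) (β : Fin m → Bool) {k K : ℕ} (h : k ≤ K) :
    cntB m K β = cntB m k β +
      (univ.filter fun i : Fin m => k ≤ (i : ℕ) ∧ (i : ℕ) < K ∧ β i = true).card := by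
  classical
  rw [cntB, cntB, ← Finset.card_union_of_disjoint ?_]
  · congr 1
    ext i
    simp only [mem_union, mem_filter, mem_univ, true_and]
    constructor
    · rintro ⟨hiK, hβ⟩
      by_cases hik : (i : ℕ) < k
      · exact Or.inl ⟨hik, hβ⟩
      · exact Or.inr ⟨le_of_not_gt hik, hiK, hβ⟩
    · rintro (⟨hik, hβ⟩ | ⟨_, hiK, hβ⟩) <;> exact ⟨by omega, hβ⟩
  · rw [Finset.disjoint_left]
    intro i hi hi'
    simp only [mem_filter, mem_univ, true_and] at hi hi'
    omega

lemma cntB_succ (m k : ℕ) (hk : 1 ≤ k) (hkm : k ≤ m) (β : Fin m → Bool)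
    (i₀ : Fin m) (hi₀ : (i₀ : ℕ) = k - 1) :
    cntB m k β = cntB m (k - 1) β + (if β i₀ = true then 1 else 0) := by
  classical
  rw [cntB_split m β (Nat.sub_le k 1)]
  congr 1
  have hset : (univ.filter fun i : Fin m => k - 1 ≤ (i : ℕ) ∧ (i : ℕ) < k ∧ β i = true)
      = if β i₀ = true then {i₀} else ∅ := by
    by_cases hb : β i₀ = true
    · rw [if_pos hb]
      ext i
      simp only [mem_filter, mem_univ, true_and, mem_singleton]
      constructor
      · rintro ⟨h1, h2, _⟩
        exact Fin.ext (show (i : ℕ) = (i₀ : ℕ) by omega)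
      · rintro rfl
        exact ⟨by omega, by omega, hb⟩
    · rw [if_neg hb]
      ext i
      simp only [mem_filter, mem_univ, true_and, notMem_empty, iff_false]
      rintro ⟨h1, h2, h3⟩
      have hie : i = i₀ := Fin.ext (show (i : ℕ) = (i₀ : ℕ) by omega)
      exact hb (hie ▸ h3)
  rw [hset]
  split <;> simp

lemma cntB_swap (m k : ℕ) (β : Fin m → Bool) {a b : Fin m} (ha : (a : ℕ) < k)
    (hb : (b : ℕ) < k) : cntB m k (β ∘ Equiv.swap a b) = cntB m k β := by
  classical
  unfold cntB
  apply Finset.card_nbij (fun i => Equiv.swap a b i)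
  · intro i hi
    simp only [Finset.mem_coe, mem_filter, mem_univ, true_and, Function.comp_apply] at hi ⊢
    refine ⟨?_, hi.2⟩
    rw [Equiv.swap_apply_def]
    split_ifs
    · exact hb
    · exact ha
    · exact hi.1
  · exact (Equiv.injective _).injOn
  · intro u hu
    simp only [Finset.coe_filter, Set.mem_setOf_eq, mem_univ, true_and, Set.mem_image,
      Function.comp_apply] at hu ⊢
    refine ⟨Equiv.swap a b u, ⟨?_, ?_⟩, ?_⟩
    · rw [Equiv.swap_apply_def]
      split_ifs
      · exact hb
      · exact ha
      · exact hu.1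
    · rw [Equiv.swap_apply_self]
      exact hu.2
    · rw [Equiv.swap_apply_self]

lemma count_swap_key (m k v : ℕ) (hkm : k ≤ m) (Q : (Fin m → Bool) → Prop)
    (hQ : ∀ β γ : Fin m → Bool, (∀ i : Fin m, k ≤ (i : ℕ) → β i = γ i) → (Q β ↔ Q γ))
    (i₀ : Fin m) (hi₀ : (i₀ : ℕ) < k) (s : Finset (Fin m → Bool))
    (hs : ∀ β, β ∈ s ↔ cntB m k β = v ∧ Q β) :
    k * (s.filter fun β => β i₀ = true).card = v * s.card := by
  classical
  have hmem : ∀ a : Fin m, (a : ℕ) < k → ∀ β : Fin m → Bool,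
      β ∈ s → β ∘ Equiv.swap a i₀ ∈ s := by
    intro a ha β hβ
    rw [hs] at hβ ⊢
    obtain ⟨hc, hq⟩ := hβ
    refine ⟨?_, ?_⟩
    · rw [cntB_swap m k β ha hi₀]; exact hc
    · refine (hQ _ _ (fun i hi => ?_)).mpr hq
      rw [Function.comp_apply, Equiv.swap_apply_of_ne_of_ne]
      · exact fun h => absurd hi (by rw [h]; omega)
      · exact fun h => absurd hi (by rw [h]; omega)
  have hA : ∀ a : Fin m, (a : ℕ) < k →
      (s.filter fun β => β a = true).card = (s.filter fun β => β i₀ = true).card := by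
    intro a ha
    apply Finset.card_nbij (fun β => β ∘ Equiv.swap a i₀)
    · intro β hβ
      rw [Finset.mem_coe, mem_filter] at hβ ⊢
      refine ⟨hmem a ha β hβ.1, ?_⟩
      dsimp only
      rw [Function.comp_apply, Equiv.swap_apply_right]
      exact hβ.2
    · intro β _ γ _ h
      funext i
      have := congrFun h (Equiv.swap a i₀ i)
      simpa [Equiv.swap_apply_self] using this
    · intro γ hγ
      simp only [Finset.coe_filter, Set.mem_setOf_eq, Set.mem_image] at hγ ⊢
      obtain ⟨hγs, hγv⟩ := hγ
      refine ⟨γ ∘ Equiv.swap a i₀, ⟨?_, ?_⟩, ?_⟩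
      · exact hmem a ha γ hγs
      · rw [Function.comp_apply, Equiv.swap_apply_left]
        exact hγv
      · funext i
        simp [Equiv.swap_apply_self]
  have hB : ∑ a ∈ univ.filter (fun i : Fin m => (i : ℕ) < k),
      (s.filter fun β => β a = true).card = v * s.card := by
    have hcf : ∀ a : Fin m, (s.filter fun β => β a = true).card
        = ∑ β ∈ s, (if β a = true then 1 else 0) := by
      intro a
      rw [Finset.card_filter]
    simp_rw [hcf]
    rw [Finset.sum_comm]
    have hinner : ∀ β ∈ s, ∑ a ∈ univ.filter (fun i : Fin m => (i : ℕ) < k),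
        (if β a = true then 1 else 0) = v := by
      intro β hβ
      have hc : cntB m k β = v := ((hs β).mp hβ).1
      rw [← hc, cntB, Finset.card_filter, Finset.sum_filter]
      apply Finset.sum_congr rfl
      intro i _
      by_cases h1 : (i : ℕ) < k <;> by_cases h2 : β i = true <;> simp [h1, h2]
    rw [Finset.sum_congr rfl hinner, Finset.sum_const, smul_eq_mul, mul_comm]
  calc k * (s.filter fun β => β i₀ = true).card
      = ∑ _a ∈ univ.filter (fun i : Fin m => (i : ℕ) < k),
          (s.filter fun β => β i₀ = true).card := by
        rw [Finset.sum_const, card_filter_lt m k hkm, smul_eq_mul]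
    _ = ∑ a ∈ univ.filter (fun i : Fin m => (i : ℕ) < k),
          (s.filter fun β => β a = true).card := by
        refine Finset.sum_congr rfl fun a ha => ?_
        have hak : (a : ℕ) < k := by
          simpa using (mem_filter.mp ha).2
        exact (hA a hak).symm
    _ = v * s.card := hB

lemma card_cntB_eq (m v : ℕ) :
    (univ.filter fun β : Fin m → Bool => cntB m m β = v).card = m.choose v := by
  classical
  have h1 : (univ.filter fun β : Fin m → Bool => cntB m m β = v).card
      = (Finset.powersetCard v (univ : Finset (Fin m))).card := by
    have hcnt : ∀ β : Fin m → Bool, cntB m m β = (univ.filter fun i => β i = true).card := by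
      intro β
      unfold cntB
      congr 1
      apply Finset.filter_congr
      intro i _
      simp [i.isLt]
    apply Finset.card_nbij (fun β => univ.filter fun i => β i = true)
    · intro β hβ
      rw [Finset.mem_coe, mem_filter] at hβ
      rw [Finset.mem_coe, Finset.mem_powersetCard]
      exact ⟨Finset.filter_subset _ _ |>.trans (by simp), by rw [← hcnt β]; exact hβ.2⟩
    · intro β _ γ _ h
      funext i
      have := Finset.ext_iff.mp h i
      simp only [mem_filter, mem_univ, true_and] at this
      rw [Bool.eq_iff_iff]
      exact this
    · intro S hS
      simp only [Finset.coe_filter, Set.mem_setOf_eq, Set.mem_image] at hS ⊢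
      rw [Finset.mem_coe, Finset.mem_powersetCard] at hS
      refine ⟨fun i => decide (i ∈ S), ⟨mem_univ _, ?_⟩, ?_⟩
      · rw [hcnt]
        rw [← hS.2]
        congr 1
        ext i
        simp
      · ext i
        simp
  rw [h1, Finset.card_powersetCard, Finset.card_univ, Fintype.card_fin]

/-- `rhoR k u = u / (1 + (k - u))`, the value of `M_k` when `V⁺(k) = u`. -/
noncomputable def rhoR (k u : ℕ) : ℝ := (u : ℝ) / (1 + ((k : ℝ) - (u : ℝ)))

/-- `phiR k v` is the conditional expectation of `M_{k-1}` given `V⁺(k) = v`. -/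
noncomputable def phiR (k v : ℕ) : ℝ :=
  ((v : ℝ) / (k : ℝ)) * rhoR (k - 1) (v - 1) + (((k - v : ℕ) : ℝ) / (k : ℝ)) * rhoR (k - 1) v

lemma rhoR_nonneg {k u : ℕ} (h : u ≤ k) : 0 ≤ rhoR k u := by
  apply div_nonneg (by positivity)
  have : (u : ℝ) ≤ (k : ℝ) := by exact_mod_cast h
  linarith

lemma rhoR_le {k u : ℕ} (h : u ≤ k) : rhoR k u ≤ k := by
  have hc : (u : ℝ) ≤ (k : ℝ) := by exact_mod_cast h
  have : rhoR k u ≤ (u : ℝ) := by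
    apply div_le_self (by positivity)
    linarith
  linarith

lemma phiR_nonneg {k v : ℕ} (hk : 1 ≤ k) (hv : v ≤ k) : 0 ≤ phiR k v := by
  unfold phiR
  by_cases h : v = k
  · subst h
    simp only [Nat.sub_self, Nat.cast_zero, zero_div, zero_mul, add_zero]
    apply mul_nonneg (by positivity)
    exact rhoR_nonneg (by omega)
  · apply add_nonneg
    · exact mul_nonneg (by positivity) (rhoR_nonneg (by omega))
    · exact mul_nonneg (by positivity) (rhoR_nonneg (by omega))

lemma rhoR_self_sub_one (k : ℕ) : rhoR (k - 1) (k - 1) = ((k - 1 : ℕ) : ℝ) := by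
  rw [rhoR, sub_self, add_zero, div_one]

lemma phiR_le_rhoR {k v : ℕ} (hk : 1 ≤ k) (hv : v ≤ k) : phiR k v ≤ rhoR k v := by
  have hK0 : (k : ℝ) ≠ 0 := by positivity
  rcases Nat.eq_zero_or_pos v with h0 | hpos
  · subst h0
    simp [phiR, rhoR]
  rcases eq_or_lt_of_le hv with heq | hlt
  · subst heq
    have h1 : phiR v v = ((v - 1 : ℕ) : ℝ) := by
      unfold phiR
      simp only [Nat.sub_self, Nat.cast_zero, zero_div, zero_mul, add_zero]
      rw [div_self hK0, one_mul, rhoR_self_sub_one]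
    have h2 : rhoR v v = (v : ℝ) := by
      rw [rhoR, sub_self, add_zero, div_one]
    rw [h1, h2]
    have hc : ((v - 1 : ℕ) : ℝ) = (v : ℝ) - 1 := by
      rw [Nat.cast_sub hpos, Nat.cast_one]
    rw [hc]
    linarith
  · have c1 : ((k - 1 : ℕ) : ℝ) = (k : ℝ) - 1 := by
      rw [Nat.cast_sub hk, Nat.cast_one]
    have c2 : ((v - 1 : ℕ) : ℝ) = (v : ℝ) - 1 := by
      rw [Nat.cast_sub hpos, Nat.cast_one]
    have c3 : ((k - v : ℕ) : ℝ) = (k : ℝ) - (v : ℝ) := by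
      rw [Nat.cast_sub hv]
    have hVk : (v : ℝ) < (k : ℝ) := by exact_mod_cast hlt
    have hV1 : (1 : ℝ) ≤ (v : ℝ) := by exact_mod_cast hpos
    have hle : phiR k v = rhoR k v := by
      unfold phiR rhoR
      rw [c1, c2, c3]
      have d1 : (1 : ℝ) + (((k : ℝ) - 1) - ((v : ℝ) - 1)) ≠ 0 := by linarith
      have d2 : (1 : ℝ) + (((k : ℝ) - 1) - (v : ℝ)) ≠ 0 := by linarith
      have d3 : (1 : ℝ) + ((k : ℝ) - (v : ℝ)) ≠ 0 := by linarith
      field_simp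
      ring
    rw [hle]

lemma phiR_mul {k v : ℕ} (hk : 1 ≤ k) (hv : v ≤ k) :
    (k : ℝ) * phiR k v
      = (v : ℝ) * rhoR (k - 1) (v - 1) + ((k : ℝ) - (v : ℝ)) * rhoR (k - 1) v := by
  have hK0 : (k : ℝ) ≠ 0 := by positivity
  have c3 : ((k - v : ℕ) : ℝ) = (k : ℝ) - (v : ℝ) := by
    rw [Nat.cast_sub hv]
  unfold phiR
  rw [c3]
  field_simp

lemma sum_choose_rhoR (m : ℕ) :
    ∑ v ∈ Finset.range (m + 1), (m.choose v : ℝ) * rhoR m v = 2 ^ m - 1 := by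
  have hterm : ∀ v ∈ Finset.range (m + 1), (m.choose v : ℝ) * rhoR m v
      = if v = 0 then 0 else (m.choose (v - 1) : ℝ) := by
    intro v hv
    rw [Finset.mem_range] at hv
    by_cases h0 : v = 0
    · subst h0; simp [rhoR]
    · rw [if_neg h0]
      have hv1 : 1 ≤ v := Nat.one_le_iff_ne_zero.mpr h0
      have hvm : v ≤ m := by omega
      have hd : (1 : ℝ) + ((m : ℝ) - (v : ℝ)) = ((m - (v - 1) : ℕ) : ℝ) := by
        rw [Nat.cast_sub (by omega), Nat.cast_sub hv1, Nat.cast_one]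
        ring
      have hnat : (m.choose v : ℝ) * v = (m.choose (v - 1) : ℝ) * ((m - (v - 1) : ℕ) : ℝ) := by
        have h := Nat.choose_succ_right_eq m (v - 1)
        rw [Nat.sub_add_cancel hv1] at h
        exact_mod_cast congrArg (fun x : ℕ => (x : ℝ)) h
      have hdne : ((m - (v - 1) : ℕ) : ℝ) ≠ 0 := by
        have : 0 < m - (v - 1) := by omega
        positivity
      rw [rhoR, hd, ← mul_div_assoc, div_eq_iff hdne]
      exact hnat
  rw [Finset.sum_congr rfl hterm, Finset.sum_range_succ']
  simp only [Nat.succ_ne_zero, if_false, Nat.add_sub_cancel, if_pos rfl, add_zero,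
    Nat.add_eq_zero, and_false]
  have hnat : ∑ i ∈ Finset.range m, m.choose i = 2 ^ m - 1 := by
    have h := Nat.sum_range_choose m
    rw [Finset.sum_range_succ, Nat.choose_self] at h
    omega
  rw [← Nat.cast_sum, hnat, Nat.cast_sub Nat.one_le_two_pow]
  push_cast
  ring

section ProbAux
set_option linter.unusedSectionVars false

variable {Ω : Type*} [mΩ : MeasurableSpace Ω]

/-- The boolean sign pattern of `ε` at `ω`. -/
noncomputable def bmap (m : ℕ) (ε : Fin m → Ω → ℝ) (ω : Ω) : Fin m → Bool :=
  fun i => if ε i ω = 1 then true else false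

lemma vplus_eq_cntB (m : ℕ) (ε : Fin m → Ω → ℝ) (k : ℕ) (ω : Ω) :
    Vplus m ε k ω = cntB m k (bmap m ε ω) := by
  unfold Vplus cntB bmap
  congr 1
  apply Finset.filter_congr
  intro i _
  by_cases h : ε i ω = 1 <;> simp [h]

lemma ratioM_eq_rhoR (m : ℕ) (ε : Fin m → Ω → ℝ) (k : ℕ) (ω : Ω) :
    ratioM m ε k ω = rhoR k (Vplus m ε k ω) := rfl

lemma measurable_bmap (m : ℕ) (ε : Fin m → Ω → ℝ) (hmeas : ∀ i, Measurable (ε i)) :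
    Measurable (bmap m ε) := by
  apply measurable_pi_lambda
  intro i
  exact Measurable.ite ((hmeas i) (measurableSet_singleton 1)) measurable_const measurable_const

variable (P : Measure Ω) [IsProbabilityMeasure P]

lemma meas_bmap_preimage (m : ℕ) (ε : Fin m → Ω → ℝ) (hmeas : ∀ i, Measurable (ε i))
    (hindep : iIndepFun ε P)
    (hunif : ∀ i, P {ω | ε i ω = 1} = 1 / 2 ∧ P {ω | ε i ω = -1} = 1 / 2)
    (β : Fin m → Bool) :
    P (bmap m ε ⁻¹' {β}) = (2 : ENNReal)⁻¹ ^ m := by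
  classical
  have hpre : bmap m ε ⁻¹' {β}
      = ⋂ i ∈ (univ : Finset (Fin m)), ε i ⁻¹' (if β i = true then {1} else ({1}ᶜ : Set ℝ)) := by
    ext ω
    simp only [Set.mem_preimage, Set.mem_singleton_iff, Set.mem_iInter, Finset.mem_univ,
      forall_const, funext_iff]
    refine forall_congr' fun i => ?_
    by_cases hβ : β i = true <;> by_cases hε : ε i ω = 1 <;>
      simp [bmap, hβ, hε]
  rw [hpre]
  rw [hindep.measure_inter_preimage_eq_mul univ
    (fun i _ => by
      by_cases hβ : β i = true
      · rw [if_pos hβ]; exact measurableSet_singleton 1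
      · rw [if_neg hβ]; exact (measurableSet_singleton 1).compl)]
  have hfac : ∀ i : Fin m, P (ε i ⁻¹' (if β i = true then {1} else ({1}ᶜ : Set ℝ)))
      = (2 : ENNReal)⁻¹ := by
    intro i
    have h1 : P (ε i ⁻¹' ({1} : Set ℝ)) = 2⁻¹ := by
      have := (hunif i).1
      rw [show ε i ⁻¹' ({1} : Set ℝ) = {ω | ε i ω = 1} from rfl, this, one_div]
    by_cases hβ : β i = true
    · rw [if_pos hβ]; exact h1
    · rw [if_neg hβ]
      have hc : ε i ⁻¹' ({1}ᶜ : Set ℝ) = (ε i ⁻¹' ({1} : Set ℝ))ᶜ := rfl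
      rw [hc, measure_compl ((hmeas i) (measurableSet_singleton 1)) (measure_ne_top P _),
        measure_univ, h1, ENNReal.one_sub_inv_two]
  rw [Finset.prod_congr rfl (fun i _ => hfac i), Finset.prod_const, Finset.card_univ,
    Fintype.card_fin]

lemma integral_comp_bmap (m : ℕ) (ε : Fin m → Ω → ℝ) (hmeas : ∀ i, Measurable (ε i))
    (hindep : iIndepFun ε P)
    (hunif : ∀ i, P {ω | ε i ω = 1} = 1 / 2 ∧ P {ω | ε i ω = -1} = 1 / 2)
    (g : (Fin m → Bool) → ℝ) :
    ∫ ω, g (bmap m ε ω) ∂P = ∑ β : Fin m → Bool, (2 : ℝ)⁻¹ ^ m * g β := by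
  classical
  have hb := measurable_bmap m ε hmeas
  haveI : IsProbabilityMeasure (P.map (bmap m ε)) := Measure.isProbabilityMeasure_map hb.aemeasurable
  have hmapv : ∀ β : Fin m → Bool, (P.map (bmap m ε)) {β} = (2 : ENNReal)⁻¹ ^ m := by
    intro β
    rw [Measure.map_apply hb (measurableSet_singleton β)]
    exact meas_bmap_preimage P m ε hmeas hindep hunif β
  rw [← integral_map hb.aemeasurable (measurable_of_countable g).aestronglyMeasurable]
  rw [integral_fintype]
  refine Finset.sum_congr rfl fun β _ => ?_
  rw [measureReal_def, hmapv β, smul_eq_mul]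
  congr 1
  rw [ENNReal.toReal_pow, ENNReal.toReal_inv]
  norm_num
  exact Integrable.of_finite

lemma integrable_comp_bmap (m : ℕ) (ε : Fin m → Ω → ℝ) (hmeas : ∀ i, Measurable (ε i))
    (g : (Fin m → Bool) → ℝ) :
    Integrable (fun ω => g (bmap m ε ω)) P := by
  have hb := measurable_bmap m ε hmeas
  haveI : IsProbabilityMeasure (P.map (bmap m ε)) := Measure.isProbabilityMeasure_map hb.aemeasurable
  exact (integrable_map_measure (measurable_of_countable g).aestronglyMeasurable
    hb.aemeasurable).mp (Integrable.of_finite)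

lemma setIntegral_comp_bmap (m : ℕ) (ε : Fin m → Ω → ℝ) (hmeas : ∀ i, Measurable (ε i))
    (hindep : iIndepFun ε P)
    (hunif : ∀ i, P {ω | ε i ω = 1} = 1 / 2 ∧ P {ω | ε i ω = -1} = 1 / 2)
    (g : (Fin m → Bool) → ℝ) (B : Set (Fin m → Bool)) :
    ∫ ω in (bmap m ε) ⁻¹' B, g (bmap m ε ω) ∂P
      = ∑ β : Fin m → Bool, (if β ∈ B then (2 : ℝ)⁻¹ ^ m * g β else 0) := by
  classical
  have hb := measurable_bmap m ε hmeas
  have hBmeas : MeasurableSet B := B.to_countable.measurableSet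
  rw [← integral_indicator (hb hBmeas)]
  have hind : (((bmap m ε) ⁻¹' B).indicator fun ω => g (bmap m ε ω))
      = fun ω => (B.indicator g) (bmap m ε ω) := by
    funext ω
    by_cases h : bmap m ε ω ∈ B <;> simp [Set.indicator, h]
  rw [hind, integral_comp_bmap P m ε hmeas hindep hunif (B.indicator g)]
  refine Finset.sum_congr rfl fun β _ => ?_
  by_cases h : β ∈ B <;> simp [Set.indicator, h]

end ProbAux

set_option maxHeartbeats 1000000 in
/-- **Backward supermartingale property and optional stopping for the
sign-ratio process.**
Let `ε₁, …, ε_m` be i.i.d. uniform `{-1, +1}` random variables, let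
`M_k = V⁺(k)/(1 + V⁻(k))` and `N_j = M_{m-j}`, and let `G_j` be the σ-algebra
generated by `V⁺(m), V⁺(m-1), …, V⁺(m-j)`. Then `(N_j)` is a supermartingale
with respect to `(G_j)`, `E[N_0] = 1 - 2^{-m} ≤ 1`, and for every stopping time
`T ≤ m` one has `E[N_T] ≤ E[N_0]`. -/
theorem sign_ratio_supermartingale_optional_stopping
    {Ω : Type*} [mΩ : MeasurableSpace Ω]
    (P : Measure Ω) [IsProbabilityMeasure P]
    (m : ℕ) (ε : Fin m → Ω → ℝ) (hmeas : ∀ i, Measurable (ε i))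
    (hindep : iIndepFun ε P)
    (hunif : ∀ i, P {ω | ε i ω = 1} = 1 / 2 ∧ P {ω | ε i ω = -1} = 1 / 2)
    (G : Filtration ℕ mΩ)
    (hG : ∀ j : ℕ, (G j : MeasurableSpace Ω) =
      ⨆ l ∈ Finset.range (min j m + 1),
        MeasurableSpace.comap (Vplus m ε (m - l)) inferInstance) :
    Supermartingale (ratioN m ε) G P ∧
    (∫ ω, ratioN m ε 0 ω ∂P) = 1 - (2 : ℝ)⁻¹ ^ m ∧
    (1 - (2 : ℝ)⁻¹ ^ m ≤ (1 : ℝ)) ∧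
    ∀ T : Ω → ℕ, IsStoppingTime G (fun ω => (T ω : WithTop ℕ)) → (∀ ω, T ω ≤ m) →
      (∫ ω, ratioN m ε (T ω) ω ∂P) ≤ ∫ ω, ratioN m ε 0 ω ∂P := by
  classical
  have hb : Measurable (bmap m ε) := measurable_bmap m ε hmeas
  have hVmeas : ∀ j : ℕ, Measurable[G j] (Vplus m ε (m - j)) := by
    intro j
    have hmem : min j m ∈ Finset.range (min j m + 1) := Finset.self_mem_range_succ _
    have hle : MeasurableSpace.comap (Vplus m ε (m - min j m)) inferInstance
        ≤ (G j : MeasurableSpace Ω) := by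
      rw [hG j]
      exact le_iSup₂ (f := fun l (_ : l ∈ Finset.range (min j m + 1)) =>
        MeasurableSpace.comap (Vplus m ε (m - l)) inferInstance) (min j m) hmem
    have hmm : m - min j m = m - j := by omega
    rw [hmm] at hle
    exact (measurable_iff_comap_le.mpr le_rfl).mono hle le_rfl
  have hNmeas : ∀ j : ℕ, Measurable[G j] (ratioN m ε j) := by
    intro j
    show Measurable[G j] fun ω => rhoR (m - j) (Vplus m ε (m - j) ω)
    exact (measurable_from_top (f := rhoR (m - j))).comp (hVmeas j)
  have hadp : StronglyAdapted G (ratioN m ε) := fun j => (hNmeas j).stronglyMeasurable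
  have hint : ∀ j, Integrable (ratioN m ε j) P := by
    intro j
    have he : ratioN m ε j = fun ω => (fun β => rhoR (m - j) (cntB m (m - j) β)) (bmap m ε ω) := by
      funext ω
      rw [ratioN, ratioM_eq_rhoR, vplus_eq_cntB]
    rw [he]
    exact integrable_comp_bmap P m ε hmeas (fun β => rhoR (m - j) (cntB m (m - j) β))
  -- expectation of N₀
  have hEN0 : (∫ ω, ratioN m ε 0 ω ∂P) = 1 - (2 : ℝ)⁻¹ ^ m := by
    have he : ∀ ω, ratioN m ε 0 ω = (fun β => rhoR m (cntB m m β)) (bmap m ε ω) := by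
      intro ω
      rw [ratioN, Nat.sub_zero, ratioM_eq_rhoR, vplus_eq_cntB]
    rw [integral_congr_ae (Filter.Eventually.of_forall he)]
    rw [integral_comp_bmap P m ε hmeas hindep hunif (fun β => rhoR m (cntB m m β))]
    have hsum : ∑ β : Fin m → Bool, rhoR m (cntB m m β) = 2 ^ m - 1 := by
      rw [← Finset.sum_fiberwise_of_maps_to (g := fun β : Fin m → Bool => cntB m m β)
        (t := Finset.range (m + 1))
        (fun β _ => Finset.mem_range.mpr (Nat.lt_succ_of_le (cntB_le m m β)))
        (fun β => rhoR m (cntB m m β))]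
      rw [← sum_choose_rhoR m]
      refine Finset.sum_congr rfl fun v _ => ?_
      have hrw : ∀ β ∈ univ.filter (fun β : Fin m → Bool => cntB m m β = v),
          rhoR m (cntB m m β) = rhoR m v := by
        intro β hβ
        rw [(Finset.mem_filter.mp hβ).2]
      rw [Finset.sum_congr rfl hrw, Finset.sum_const, card_cntB_eq, nsmul_eq_mul]
    rw [← Finset.mul_sum, hsum, mul_sub, mul_one, ← mul_pow]
    norm_num
  -- the one-step supermartingale inequality
  have hstep : ∀ j : ℕ, P[ratioN m ε (j + 1)|G j] ≤ᵐ[P] ratioN m ε j := by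
    intro j
    by_cases hjm : m ≤ j
    · -- both sides are the zero function
      have hz : ∀ i : ℕ, m ≤ i → ratioN m ε i = (0 : Ω → ℝ) := by
        intro i hi
        funext ω
        have h0 : m - i = 0 := by omega
        have hV : Vplus m ε (m - i) ω = 0 := by
          rw [h0]
          unfold Vplus
          rw [Finset.card_eq_zero]
          ext x
          simp
        rw [ratioN, ratioM_eq_rhoR, hV, rhoR]
        simp
      rw [hz (j + 1) (by omega), hz j hjm]
      rw [condExp_zero]
    · -- main case : j < m
      push_neg at hjm
      set k := m - j with hk
      have hk1 : 1 ≤ k := by omega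
      have hkm : k ≤ m := by omega
      have hkj1 : m - (j + 1) = k - 1 := by omega
      set X := Vplus m ε k with hX
      set h : Ω → ℝ := fun ω => phiR k (X ω) with hh
      have hXle : ∀ ω, X ω ≤ k := by
        intro ω
        rw [hX, vplus_eq_cntB]
        exact cntB_le m k _
      have hXmeasG : Measurable[G j] X := by
        have := hVmeas j
        rwa [← hk] at this
      have hhmeasG : Measurable[G j] h := (measurable_from_top (f := phiR k)).comp hXmeasG
      have hhb : h = fun ω => (fun β => phiR k (cntB m k β)) (bmap m ε ω) := by
        funext ω
        show phiR k (X ω) = phiR k (cntB m k (bmap m ε ω))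
        rw [hX, vplus_eq_cntB]
      have hN1b : ratioN m ε (j + 1) = fun ω => (fun β => rhoR (k - 1) (cntB m (k - 1) β)) (bmap m ε ω) := by
        funext ω
        show rhoR (m - (j + 1)) (Vplus m ε (m - (j + 1)) ω)
          = rhoR (k - 1) (cntB m (k - 1) (bmap m ε ω))
        rw [hkj1, vplus_eq_cntB]
      -- the conditional-expectation identity via set integrals
      have hseteq : ∀ s : Set Ω, MeasurableSet[G j] s → P s < ⊤ →
          ∫ ω in s, h ω ∂P = ∫ ω in s, ratioN m ε (j + 1) ω ∂P := by
        intro s hs _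
        set W' : (Fin m → Bool) → (Fin (j + 1) → ℕ) :=
          fun β l => cntB m (m - (l : ℕ)) β with hW'
        -- the fiberwise identity : the heart of the argument
        have key : ∀ w : Fin (j + 1) → ℕ,
            ∑ β ∈ univ.filter (fun β : Fin m → Bool => W' β = w), phiR k (cntB m k β)
              = ∑ β ∈ univ.filter (fun β : Fin m → Bool => W' β = w),
                  rhoR (k - 1) (cntB m (k - 1) β) := by
          intro w
          set v := w (Fin.last j) with hv
          set Q : (Fin m → Bool) → Prop := fun β => ∀ l : Fin (j + 1),
            v + (univ.filter fun i : Fin m =>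
              k ≤ (i : ℕ) ∧ (i : ℕ) < m - (l : ℕ) ∧ β i = true).card = w l with hQdef
          have hfilter : (univ.filter fun β : Fin m → Bool => W' β = w)
              = univ.filter (fun β : Fin m → Bool => cntB m k β = v ∧ Q β) := by
            apply Finset.filter_congr
            intro β _
            constructor
            · intro hWβ
              have hlast : cntB m k β = v := congrFun hWβ (Fin.last j)
              refine ⟨hlast, fun l => ?_⟩
              have h2 : cntB m (m - (l : ℕ)) β = w l := congrFun hWβ l
              rw [← h2, cntB_split m β (show k ≤ m - (l : ℕ) by
                have := l.isLt; omega), hlast]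
            · rintro ⟨hc, hq⟩
              funext l
              show cntB m (m - (l : ℕ)) β = w l
              rw [cntB_split m β (show k ≤ m - (l : ℕ) by have := l.isLt; omega), hc]
              exact hq l
          rw [hfilter]
          set s0 := univ.filter (fun β : Fin m → Bool => cntB m k β = v ∧ Q β) with hs0
          rcases Finset.eq_empty_or_nonempty s0 with hemp | hne
          · rw [hemp]
            simp
          have hvk : v ≤ k := by
            obtain ⟨β, hβ⟩ := hne
            have hβc := (Finset.mem_filter.mp hβ).2.1
            rw [← hβc]
            exact cntB_le m k β
          have hi₀lt : k - 1 < m := by omega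
          set i₀ : Fin m := ⟨k - 1, hi₀lt⟩ with hi₀
          have hi₀val : (i₀ : ℕ) = k - 1 := rfl
          have hQdep : ∀ β γ : Fin m → Bool,
              (∀ i : Fin m, k ≤ (i : ℕ) → β i = γ i) → (Q β ↔ Q γ) := by
            intro β γ hag
            have hfeq : ∀ l : Fin (j + 1),
                (univ.filter fun i : Fin m => k ≤ (i : ℕ) ∧ (i : ℕ) < m - (l : ℕ) ∧ β i = true)
                  = (univ.filter fun i : Fin m =>
                      k ≤ (i : ℕ) ∧ (i : ℕ) < m - (l : ℕ) ∧ γ i = true) := by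
              intro l
              apply Finset.filter_congr
              intro i _
              constructor
              · rintro ⟨h1, h2, h3⟩
                exact ⟨h1, h2, by rw [← hag i h1]; exact h3⟩
              · rintro ⟨h1, h2, h3⟩
                exact ⟨h1, h2, by rw [hag i h1]; exact h3⟩
            simp only [hQdef]
            exact forall_congr' fun l => by rw [hfeq l]
          have hs0mem : ∀ β : Fin m → Bool, β ∈ s0 ↔ cntB m k β = v ∧ Q β := by
            intro β
            rw [hs0, Finset.mem_filter]
            simp
          have hcount := count_swap_key m k v hkm Q hQdep i₀
            (show (i₀ : ℕ) < k by rw [hi₀val]; omega) s0 hs0mem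
          have htrue : ∀ β ∈ s0.filter (fun β => β i₀ = true),
              rhoR (k - 1) (cntB m (k - 1) β) = rhoR (k - 1) (v - 1) := by
            intro β hβ
            obtain ⟨hβ0, hβi⟩ := Finset.mem_filter.mp hβ
            have hc : cntB m k β = v := (Finset.mem_filter.mp hβ0).2.1
            have hsucc := cntB_succ m k hk1 hkm β i₀ hi₀val
            rw [hc, if_pos hβi] at hsucc
            have : cntB m (k - 1) β = v - 1 := by clear hcount; omega
            rw [this]
          have hfalse : ∀ β ∈ s0.filter (fun β => ¬ β i₀ = true),
              rhoR (k - 1) (cntB m (k - 1) β) = rhoR (k - 1) v := by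
            intro β hβ
            obtain ⟨hβ0, hβi⟩ := Finset.mem_filter.mp hβ
            have hc : cntB m k β = v := (Finset.mem_filter.mp hβ0).2.1
            have hsucc := cntB_succ m k hk1 hkm β i₀ hi₀val
            rw [hc, if_neg hβi] at hsucc
            have : cntB m (k - 1) β = v := by clear hcount; omega
            rw [this]
          have hRHS : ∑ β ∈ s0, rhoR (k - 1) (cntB m (k - 1) β)
              = ((s0.filter (fun β => β i₀ = true)).card : ℝ) * rhoR (k - 1) (v - 1)
                + ((s0.filter (fun β => ¬ β i₀ = true)).card : ℝ) * rhoR (k - 1) v := by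
            rw [← Finset.sum_filter_add_sum_filter_not s0 (fun β => β i₀ = true)]
            rw [Finset.sum_congr rfl htrue, Finset.sum_congr rfl hfalse,
              Finset.sum_const, Finset.sum_const, nsmul_eq_mul, nsmul_eq_mul]
          have hLHS : ∑ β ∈ s0, phiR k (cntB m k β) = (s0.card : ℝ) * phiR k v := by
            have hcongr : ∀ β ∈ s0, phiR k (cntB m k β) = phiR k v := by
              intro β hβ
              rw [(Finset.mem_filter.mp hβ).2.1]
            rw [Finset.sum_congr rfl hcongr, Finset.sum_const, nsmul_eq_mul]
          rw [hLHS, hRHS]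
          -- now pure algebra
          have hK0 : (k : ℝ) ≠ 0 := by positivity
          have hsplitc := Finset.card_filter_add_card_filter_not
            (s := s0) (p := fun β => β i₀ = true)
          set c1 := (s0.filter (fun β => β i₀ = true)).card with hc1
          set c0 := (s0.filter (fun β => ¬ β i₀ = true)).card with hc0
          set n := s0.card with hn
          have hc1R : (k : ℝ) * (c1 : ℝ) = (v : ℝ) * (n : ℝ) := by
            exact_mod_cast congrArg (fun x : ℕ => (x : ℝ)) hcount
          have hc0R : (c0 : ℝ) = (n : ℝ) - (c1 : ℝ) := by
            have : (c1 : ℝ) + (c0 : ℝ) = (n : ℝ) := by exact_mod_cast hsplitc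
            linarith
          have hvR : (v : ℝ) ≤ (k : ℝ) := by exact_mod_cast hvk
          apply mul_left_cancel₀ hK0
          have hphim := phiR_mul hk1 hvk
          calc (k : ℝ) * ((n : ℝ) * phiR k v) = (n : ℝ) * ((k : ℝ) * phiR k v) := by ring
            _ = (n : ℝ) * ((v : ℝ) * rhoR (k - 1) (v - 1)
                  + ((k : ℝ) - (v : ℝ)) * rhoR (k - 1) v) := by rw [hphim]
            _ = ((k : ℝ) * (c1 : ℝ)) * rhoR (k - 1) (v - 1)
                  + ((k : ℝ) * ((n : ℝ) - (c1 : ℝ))) * rhoR (k - 1) v := by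
                rw [mul_sub]
                rw [hc1R]
                ring
            _ = (k : ℝ) * ((c1 : ℝ) * rhoR (k - 1) (v - 1) + (c0 : ℝ) * rhoR (k - 1) v) := by
                rw [hc0R]
                ring
        -- obtain the description of `s` as a preimage
        obtain ⟨A, hA⟩ : ∃ A : Set (Fin (j + 1) → ℕ), s = bmap m ε ⁻¹' (W' ⁻¹' A) := by
          have hle : (G j : MeasurableSpace Ω)
              ≤ MeasurableSpace.comap
                  (fun ω (l : Fin (j + 1)) => Vplus m ε (m - (l : ℕ)) ω) ⊤ := by
            rw [hG j]
            refine iSup₂_le fun l hl => ?_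
            rw [Finset.mem_range] at hl
            have hlj : l < j + 1 := by omega
            have hcomp : Vplus m ε (m - l)
                = (fun p : Fin (j + 1) → ℕ => p ⟨l, hlj⟩)
                  ∘ (fun ω (l' : Fin (j + 1)) => Vplus m ε (m - (l' : ℕ)) ω) := rfl
            rw [hcomp, ← MeasurableSpace.comap_comp]
            exact MeasurableSpace.comap_mono le_top
          obtain ⟨A, -, hA⟩ := MeasurableSpace.measurableSet_comap.mp (hle s hs)
          refine ⟨A, ?_⟩
          rw [← hA]
          ext ω
          simp only [Set.mem_preimage]
          have hWb : (fun l : Fin (j + 1) => Vplus m ε (m - (l : ℕ)) ω) = W' (bmap m ε ω) := by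
            funext l
            exact vplus_eq_cntB m ε _ ω
          constructor
          · intro hmem
            rwa [hWb] at hmem
          · intro hmem
            rwa [← hWb] at hmem
        rw [hA, hhb, hN1b]
        rw [setIntegral_comp_bmap P m ε hmeas hindep hunif
          (fun β => phiR k (cntB m k β)) (W' ⁻¹' A)]
        rw [setIntegral_comp_bmap P m ε hmeas hindep hunif
          (fun β => rhoR (k - 1) (cntB m (k - 1) β)) (W' ⁻¹' A)]
        simp only [Set.mem_preimage]
        rw [← Finset.sum_filter (p := fun β : Fin m → Bool => W' β ∈ A)
          (f := fun β => (2 : ℝ)⁻¹ ^ m * phiR k (cntB m k β))]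
        rw [← Finset.sum_filter (p := fun β : Fin m → Bool => W' β ∈ A)
          (f := fun β => (2 : ℝ)⁻¹ ^ m * rhoR (k - 1) (cntB m (k - 1) β))]
        set t := (univ.filter (fun β : Fin m → Bool => W' β ∈ A)).image W' with ht
        rw [← Finset.sum_fiberwise_of_maps_to (g := W') (t := t)
          (fun β hβ => Finset.mem_image_of_mem _ hβ)
          (fun β => (2 : ℝ)⁻¹ ^ m * phiR k (cntB m k β))]
        rw [← Finset.sum_fiberwise_of_maps_to (g := W') (t := t)
          (fun β hβ => Finset.mem_image_of_mem _ hβ)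
          (fun β => (2 : ℝ)⁻¹ ^ m * rhoR (k - 1) (cntB m (k - 1) β))]
        refine Finset.sum_congr rfl fun w hw => ?_
        have hwA : ∀ β : Fin m → Bool, W' β = w → W' β ∈ A := by
          rw [ht] at hw
          obtain ⟨β₀, hβ₀, hβ₀w⟩ := Finset.mem_image.mp hw
          intro β hβw
          rw [hβw, ← hβ₀w]
          exact (Finset.mem_filter.mp hβ₀).2
        have hfe : (univ.filter (fun β : Fin m → Bool => W' β ∈ A)).filter
              (fun β => W' β = w)
            = univ.filter (fun β : Fin m → Bool => W' β = w) := by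
          ext β
          simp only [Finset.mem_filter, Finset.mem_univ, true_and]
          exact ⟨fun hx => hx.2, fun hx => ⟨hwA β hx, hx⟩⟩
        rw [hfe, ← Finset.mul_sum, ← Finset.mul_sum, key w]
      have hce : h =ᵐ[P] P[ratioN m ε (j + 1)|G j] := by
        refine ae_eq_condExp_of_forall_setIntegral_eq (G.le j) (hint (j + 1))
          (fun s _ _ => ?_) (fun s hs h's => hseteq s hs h's) ?_
        · refine Integrable.integrableOn ?_
          rw [hhb]
          exact integrable_comp_bmap P m ε hmeas (fun β => phiR k (cntB m k β))
        · exact (hhmeasG.stronglyMeasurable).aestronglyMeasurable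
      -- pointwise bound h ≤ N j
      have hpt : ∀ ω, h ω ≤ ratioN m ε j ω := by
        intro ω
        have : ratioN m ε j ω = rhoR k (X ω) := by
          rw [ratioN, ← hk, ratioM_eq_rhoR, hX]
        rw [this, hh]
        exact phiR_le_rhoR hk1 (hXle ω)
      filter_upwards [hce] with ω hω
      rw [← hω]
      exact hpt ω
  have hsup : Supermartingale (ratioN m ε) G P := supermartingale_nat hadp hint hstep
  have hple : 1 - (2 : ℝ)⁻¹ ^ m ≤ (1 : ℝ) := by
    have hpow : (0 : ℝ) ≤ (2 : ℝ)⁻¹ ^ m := by positivity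
    linarith
  refine ⟨hsup, hEN0, hple, ?_⟩
  intro T hT hTle
  have hneg := hsup.neg
  have hmono := hneg.expected_stoppedValue_mono (isStoppingTime_const G 0) hT
    (fun ω => WithTop.coe_le_coe.mpr (Nat.zero_le _)) (N := m) (fun ω => WithTop.coe_le_coe.mpr (hTle ω))
  have h0 : stoppedValue (-ratioN m ε) (fun _ => ((0 : ℕ) : WithTop ℕ)) = fun ω => -(ratioN m ε 0 ω) := rfl
  have hTv : stoppedValue (-ratioN m ε) (fun ω => (T ω : WithTop ℕ)) = fun ω => -(ratioN m ε (T ω) ω) := rfl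
  change ∫ ω, -(ratioN m ε 0 ω) ∂P ≤ ∫ ω, -(ratioN m ε (T ω) ω) ∂P at hmono
  rw [integral_neg, integral_neg] at hmono
  linarith
end
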